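/- Fix a constant C ∈ ℝ and a base point z₁ ∈ (0,1). Then the function v(z) := √z · (1 − z²)^{−1/4} · (C + ∫_{z₁}^{z} s^{−1/2} (1 − s²)^{−3/4} ds), defined for z ∈ (0,1), is differentiable and satisfies equation (27), i.e. 2 z (1 − z²) v'(z) = v(z) + 2z, for all z ∈ (0,1). -/

import Mathlib

open intervalIntegral

/-- The general solution of equation (27) on `(0,1)`: for any constant `C`
and base point `z₁ ∈ (0,1)`, the function
`v(z) = √z (1-z²)^{-1/4} (C + ∫_{z₁}^z s^{-1/2} (1-s²)^{-3/4} ds)`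
is differentiable on `(0,1)` and satisfies `2 z (1-z²) v'(z) = v(z) + 2z`. -/
theorem general_solution_eq27
    (C z₁ : ℝ) (hz₁ : z₁ ∈ Set.Ioo (0 : ℝ) 1)
    (v : ℝ → ℝ)
    (hv : v = fun z => Real.sqrt z * (1 - z ^ 2) ^ (-(1 / 4 : ℝ)) *
      (C + ∫ s in z₁..z, s ^ (-(1 / 2 : ℝ)) * (1 - s ^ 2) ^ (-(3 / 4 : ℝ)))) :
    ∀ z ∈ Set.Ioo (0 : ℝ) 1,
      DifferentiableAt ℝ v z ∧
      2 * z * (1 - z ^ 2) * deriv v z = v z + 2 * z := by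
  intro z hz
  obtain ⟨hz0, hz1⟩ := hz
  have hp : (0:ℝ) < 1 - z ^ 2 := by nlinarith
  set f : ℝ → ℝ := fun s => s ^ (-(1 / 2 : ℝ)) * (1 - s ^ 2) ^ (-(3 / 4 : ℝ)) with hf
  -- continuity of integrand on (0,1)
  have hK : ContinuousOn f (Set.Ioo (0:ℝ) 1) := by
    intro x hx
    have hx0 : (0:ℝ) < x := hx.1
    have hpx : (0:ℝ) < 1 - x ^ 2 := by nlinarith [hx.1, hx.2]
    apply ContinuousAt.continuousWithinAt
    apply ContinuousAt.mul
    · exact Real.continuousAt_rpow_const x _ (Or.inl hx0.ne')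
    · exact ContinuousAt.rpow_const (by fun_prop) (Or.inl hpx.ne')
  have hsub : Set.uIcc z₁ z ⊆ Set.Ioo (0:ℝ) 1 :=
    (Set.ordConnected_Ioo).uIcc_subset hz₁ ⟨hz0, hz1⟩
  have hint : IntervalIntegrable f MeasureTheory.volume z₁ z :=
    (hK.mono hsub).intervalIntegrable
  have hmeas : StronglyMeasurableAtFilter f (nhds z) MeasureTheory.volume :=
    AEStronglyMeasurable.stronglyMeasurableAtFilter_of_mem
      (hK.aestronglyMeasurable measurableSet_Ioo)
      (isOpen_Ioo.mem_nhds ⟨hz0, hz1⟩)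
  have hcont : ContinuousAt f z := hK.continuousAt (isOpen_Ioo.mem_nhds ⟨hz0, hz1⟩)
  have hG : HasDerivAt (fun t => ∫ s in z₁..t, f s) (f z) z :=
    intervalIntegral.integral_hasDerivAt_right hint hmeas hcont
  -- derivative of the prefactor
  have hs1 : HasDerivAt (fun t => Real.sqrt t) (1 / (2 * Real.sqrt z)) z :=
    Real.hasDerivAt_sqrt hz0.ne'
  have hinner : HasDerivAt (fun t : ℝ => 1 - t ^ 2) (-(2 * z)) z := by
    have h2 : HasDerivAt (fun t : ℝ => t ^ 2) (2 * z) z := by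
      simpa using hasDerivAt_pow 2 z
    simpa using h2.const_sub 1
  have hA2 : HasDerivAt (fun t : ℝ => (1 - t ^ 2) ^ (-(1 / 4 : ℝ)))
      ((-(2 * z)) * (-(1 / 4 : ℝ)) * (1 - z ^ 2) ^ ((-(1 / 4 : ℝ)) - 1)) z :=
    hinner.rpow_const (Or.inl hp.ne')
  have hV : HasDerivAt v
      ((1 / (2 * Real.sqrt z) * (1 - z ^ 2) ^ (-(1 / 4 : ℝ)) +
        Real.sqrt z * ((-(2 * z)) * (-(1 / 4 : ℝ)) * (1 - z ^ 2) ^ ((-(1 / 4 : ℝ)) - 1))) *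
        (C + ∫ s in z₁..z, f s) +
        Real.sqrt z * (1 - z ^ 2) ^ (-(1 / 4 : ℝ)) * f z) z := by
    rw [hv]
    exact ((hs1.mul hA2).mul ((hasDerivAt_const z C).add hG)).congr_deriv (by simp)
  refine ⟨hV.differentiableAt, ?_⟩
  rw [hV.deriv, hv]
  simp only [← hf]
  -- algebraic identities
  set s := Real.sqrt z with hsdef
  have hs0 : 0 < s := Real.sqrt_pos.mpr hz0
  have hs2 : s * s = z := Real.mul_self_sqrt hz0.le
  set q := (1 - z ^ 2) ^ (-(1 / 4 : ℝ)) with hqdef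
  have hq0 : 0 < q := Real.rpow_pos_of_pos hp _
  have h3 : (1 - z ^ 2) ^ (-(3 / 4 : ℝ)) = q ^ 3 := by
    rw [hqdef, ← Real.rpow_natCast ((1 - z ^ 2) ^ (-(1 / 4 : ℝ))) 3,
      ← Real.rpow_mul hp.le]
    norm_num
  have h5 : (1 - z ^ 2) ^ ((-(1 / 4 : ℝ)) - 1) = q ^ 5 := by
    rw [hqdef, ← Real.rpow_natCast ((1 - z ^ 2) ^ (-(1 / 4 : ℝ))) 5,
      ← Real.rpow_mul hp.le]
    norm_num
  have hq4 : q ^ 4 * (1 - z ^ 2) = 1 := by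
    rw [hqdef, ← Real.rpow_natCast ((1 - z ^ 2) ^ (-(1 / 4 : ℝ))) 4,
      ← Real.rpow_mul hp.le]
    norm_num
    rw [Real.rpow_neg_one]
    field_simp
  have hzh : z ^ (-(1 / 2 : ℝ)) = s⁻¹ := by
    rw [Real.rpow_neg hz0.le, hsdef, Real.sqrt_eq_rpow]
  rw [hf]
  simp only
  rw [h3, h5, hzh]
  set G := ∫ s in z₁..z, s ^ (-(1 / 2 : ℝ)) * (1 - s ^ 2) ^ (-(3 / 4 : ℝ)) with hGdef
  field_simp
  linear_combination (4*z^2*s^2*q*(C+G)+8*z*s) * hq4 + (4*q*(C+G)*(z^2-1)) * hs2
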